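/- In ℝ³ with coordinates (x, y, t), the function u(x, y, t) = ((e^{4t} − 1)/4)(x² + y²) + (1/16)((7 e^{−4t})/4 − e^{4t}/4 − 4t²) satisfies σ₂(D²u) + σ₁(D²u) = 1 at every point of ℝ³, and u is 1-convex, i.e. Δu = σ₁(D²u) > 0 everywhere. -/

import Mathlib

open scoped BigOperators

/-- `sigmaMat k A` is the `k`-th elementary symmetric function of the eigenvalues of the
symmetric matrix `A`, computed as the sum of all `k × k` principal minors of `A`. -/
noncomputable def sigmaMat {n : ℕ} (k : ℕ) (A : Matrix (Fin n) (Fin n) ℝ) : ℝ :=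
  ∑ s ∈ Finset.univ.powersetCard k,
    Matrix.det (fun i j : {x : Fin n // x ∈ s} => A i.1 j.1)

/-- The Hessian matrix `D²u` of `u : ℝⁿ → ℝ` at a point `x`. -/
noncomputable def hessian {n : ℕ} (u : EuclideanSpace ℝ (Fin n) → ℝ)
    (x : EuclideanSpace ℝ (Fin n)) : Matrix (Fin n) (Fin n) ℝ :=
  fun i j => iteratedFDeriv ℝ 2 u x ![EuclideanSpace.single i 1, EuclideanSpace.single j 1]
namespace SigmaProof

lemma det_subtype_single (A : Matrix (Fin 3) (Fin 3) ℝ) (i : Fin 3) :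
    Matrix.det (fun a b : {x : Fin 3 // x ∈ ({i} : Finset (Fin 3))} => A a.1 b.1) = A i i := by
  letI : Unique {x : Fin 3 // x ∈ ({i} : Finset (Fin 3))} :=
    ⟨⟨⟨i, by simp⟩⟩, by rintro ⟨x, hx⟩; simp only [Finset.mem_singleton] at hx; exact Subtype.ext hx⟩
  change Matrix.det (Matrix.of fun a b : {x : Fin 3 // x ∈ ({i} : Finset (Fin 3))} => A a.1 b.1) = _
  rw [Matrix.det_unique]; rfl

def pairEquiv (i j : Fin 3) (hij : i ≠ j) :
    Fin 2 ≃ {x : Fin 3 // x ∈ ({i, j} : Finset (Fin 3))} where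
  toFun := ![⟨i, by simp⟩, ⟨j, by simp⟩]
  invFun := fun x => if x.1 = i then 0 else 1
  left_inv := by
    intro a
    fin_cases a
    · simp
    · simp [hij.symm]
  right_inv := by
    rintro ⟨x, hx⟩
    simp only [Finset.mem_insert, Finset.mem_singleton] at hx
    rcases hx with h | h
    · subst h; simp
    · subst h
      by_cases hxi : x = i
      · subst hxi; simp
      · simp [hxi]

lemma det_subtype_pair (A : Matrix (Fin 3) (Fin 3) ℝ) (i j : Fin 3) (hij : i ≠ j) :
    Matrix.det (fun a b : {x : Fin 3 // x ∈ ({i, j} : Finset (Fin 3))} => A a.1 b.1)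
      = A i i * A j j - A i j * A j i := by
  change Matrix.det (Matrix.of fun a b : {x : Fin 3 // x ∈ ({i, j} : Finset (Fin 3))} => A a.1 b.1) = _
  rw [← Matrix.det_submatrix_equiv_self (pairEquiv i j hij)]
  rw [Matrix.det_fin_two]
  simp [Matrix.submatrix_apply, pairEquiv]

lemma sigmaMat_one (A : Matrix (Fin 3) (Fin 3) ℝ) :
    sigmaMat 1 A = A 0 0 + A 1 1 + A 2 2 := by
  have h : (Finset.univ.powersetCard 1 : Finset (Finset (Fin 3)))
      = {{0}, {1}, {2}} := by decide
  rw [sigmaMat, h]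
  rw [Finset.sum_insert (by decide), Finset.sum_insert (by decide), Finset.sum_singleton]
  rw [det_subtype_single, det_subtype_single, det_subtype_single]; ring

lemma sigmaMat_two (A : Matrix (Fin 3) (Fin 3) ℝ) :
    sigmaMat 2 A = (A 0 0 * A 1 1 - A 0 1 * A 1 0) + (A 0 0 * A 2 2 - A 0 2 * A 2 0)
      + (A 1 1 * A 2 2 - A 1 2 * A 2 1) := by
  have h : (Finset.univ.powersetCard 2 : Finset (Finset (Fin 3)))
      = {{0, 1}, {0, 2}, {1, 2}} := by decide
  rw [sigmaMat, h]
  rw [Finset.sum_insert (by decide), Finset.sum_insert (by decide), Finset.sum_singleton]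
  rw [det_subtype_pair A 0 1 (by decide), det_subtype_pair A 0 2 (by decide),
    det_subtype_pair A 1 2 (by decide)]
  ring

end SigmaProof

namespace AnalysisPart

open Real

abbrev E3 := EuclideanSpace ℝ (Fin 3)

noncomputable def U : E3 → ℝ := fun p =>
  ((Real.exp (4 * p 2) - 1) / 4) * ((p 0) ^ 2 + (p 1) ^ 2)
    + (1 / 16) * (7 * Real.exp (-(4 * p 2)) / 4 - Real.exp (4 * p 2) / 4 - 4 * (p 2) ^ 2)

noncomputable def f0 : E3 → ℝ := fun p => (Real.exp (4 * p 2) - 1) * p 0 * 2⁻¹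
noncomputable def f1 : E3 → ℝ := fun p => (Real.exp (4 * p 2) - 1) * p 1 * 2⁻¹
noncomputable def f2 : E3 → ℝ := fun p =>
  Real.exp (4 * p 2) * (p 0 * p 0 + p 1 * p 1)
    + (-(7 * Real.exp (-(4 * p 2))) - Real.exp (4 * p 2) - 8 * p 2) * 16⁻¹

noncomputable def L (p : E3) : E3 →L[ℝ] ℝ :=
  f0 p • EuclideanSpace.proj 0 + f1 p • EuclideanSpace.proj 1 + f2 p • EuclideanSpace.proj 2

lemma hasFDerivAt_coord (i : Fin 3) (p : E3) :
    HasFDerivAt (fun q : E3 => q i) (EuclideanSpace.proj i : E3 →L[ℝ] ℝ) p :=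
  (EuclideanSpace.proj i : E3 →L[ℝ] ℝ).hasFDerivAt

lemma hasFDerivAt_U (p : E3) : HasFDerivAt U (L p) p := by
  have h0 := hasFDerivAt_coord 0 p
  have h1 := hasFDerivAt_coord 1 p
  have h2 := hasFDerivAt_coord 2 p
  have hm : HasFDerivAt (fun q : E3 => 4 * q 2)
      ((4 : ℝ) • (EuclideanSpace.proj 2 : E3 →L[ℝ] ℝ)) p := h2.const_mul 4
  have he := hm.exp
  have hne := hm.neg.exp
  have H := ((((he.sub_const 1).mul ((h0.mul h0).add (h1.mul h1))).mul_const (4⁻¹:ℝ)).add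
    (((((hne.const_mul 7).mul_const (4⁻¹:ℝ)).sub (he.mul_const (4⁻¹:ℝ))).sub
      ((h2.mul h2).const_mul 4)).mul_const (16⁻¹:ℝ)))
  have hfun : U = fun q : E3 =>
      (Real.exp (4 * q 2) - 1) * (q 0 * q 0 + q 1 * q 1) * 4⁻¹
        + (7 * Real.exp (-(4 * q 2)) * 4⁻¹ - Real.exp (4 * q 2) * 4⁻¹ - 4 * (q 2 * q 2)) * 16⁻¹ := by
    funext q; simp only [U]; ring
  rw [hfun]
  refine H.congr_fderiv ?_
  ext w
  simp [L, f0, f1, f2]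
  ring

end AnalysisPart

namespace AnalysisPart

noncomputable def M0 (p : E3) : E3 →L[ℝ] ℝ :=
  ((Real.exp (4 * p 2) - 1) * 2⁻¹) • EuclideanSpace.proj 0
    + (2 * Real.exp (4 * p 2) * p 0) • EuclideanSpace.proj 2

noncomputable def M1 (p : E3) : E3 →L[ℝ] ℝ :=
  ((Real.exp (4 * p 2) - 1) * 2⁻¹) • EuclideanSpace.proj 1
    + (2 * Real.exp (4 * p 2) * p 1) • EuclideanSpace.proj 2

noncomputable def M2 (p : E3) : E3 →L[ℝ] ℝ :=
  (2 * Real.exp (4 * p 2) * p 0) • EuclideanSpace.proj 0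
    + (2 * Real.exp (4 * p 2) * p 1) • EuclideanSpace.proj 1
    + (4 * Real.exp (4 * p 2) * (p 0 * p 0 + p 1 * p 1)
        + (7 * Real.exp (-(4 * p 2)) - Real.exp (4 * p 2)) * 4⁻¹ - 2⁻¹) • EuclideanSpace.proj 2

lemma hasFDerivAt_f0 (p : E3) : HasFDerivAt f0 (M0 p) p := by
  have h0 := hasFDerivAt_coord 0 p
  have h2 := hasFDerivAt_coord 2 p
  have hm : HasFDerivAt (fun q : E3 => 4 * q 2)
      ((4 : ℝ) • (EuclideanSpace.proj 2 : E3 →L[ℝ] ℝ)) p := h2.const_mul 4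
  have H := ((hm.exp.sub_const 1).mul h0).mul_const (2⁻¹ : ℝ)
  refine H.congr_fderiv ?_
  ext w
  simp [M0, f0]
  ring

lemma hasFDerivAt_f1 (p : E3) : HasFDerivAt f1 (M1 p) p := by
  have h1 := hasFDerivAt_coord 1 p
  have h2 := hasFDerivAt_coord 2 p
  have hm : HasFDerivAt (fun q : E3 => 4 * q 2)
      ((4 : ℝ) • (EuclideanSpace.proj 2 : E3 →L[ℝ] ℝ)) p := h2.const_mul 4
  have H := ((hm.exp.sub_const 1).mul h1).mul_const (2⁻¹ : ℝ)
  refine H.congr_fderiv ?_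
  ext w
  simp [M1, f1]
  ring

lemma hasFDerivAt_f2 (p : E3) : HasFDerivAt f2 (M2 p) p := by
  have h0 := hasFDerivAt_coord 0 p
  have h1 := hasFDerivAt_coord 1 p
  have h2 := hasFDerivAt_coord 2 p
  have hm : HasFDerivAt (fun q : E3 => 4 * q 2)
      ((4 : ℝ) • (EuclideanSpace.proj 2 : E3 →L[ℝ] ℝ)) p := h2.const_mul 4
  have he := hm.exp
  have hne := hm.neg.exp
  have H := (he.mul ((h0.mul h0).add (h1.mul h1))).add
    ((((hne.const_mul 7).neg.sub he).sub (h2.const_mul 8)).mul_const (16⁻¹ : ℝ))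
  refine H.congr_fderiv ?_
  ext w
  simp [M2, f2]
  ring

lemma differentiableAt_L (p : E3) : DifferentiableAt ℝ L p := by
  exact (((hasFDerivAt_f0 p).differentiableAt.smul_const _).add
      ((hasFDerivAt_f1 p).differentiableAt.smul_const _)).add
      ((hasFDerivAt_f2 p).differentiableAt.smul_const _)

lemma hessian_U (p : E3) (i j : Fin 3) :
    hessian U p i j
      = fderiv ℝ (fun q : E3 => L q (EuclideanSpace.single j 1)) p (EuclideanSpace.single i 1) := by
  have hU : fderiv ℝ U = L := funext fun q => (hasFDerivAt_U q).fderiv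
  simp only [hessian, iteratedFDeriv_two_apply, Matrix.cons_val_zero, Matrix.cons_val_one,
    Matrix.head_cons]
  rw [hU, fderiv_clm_apply (differentiableAt_L p) (differentiableAt_const _)]
  simp

lemma L_apply0 (q : E3) : L q (EuclideanSpace.single (0 : Fin 3) 1) = f0 q := by
  simp [L, EuclideanSpace.single_apply]

lemma L_apply1 (q : E3) : L q (EuclideanSpace.single (1 : Fin 3) 1) = f1 q := by
  simp [L, EuclideanSpace.single_apply]

lemma L_apply2 (q : E3) : L q (EuclideanSpace.single (2 : Fin 3) 1) = f2 q := by
  simp [L, EuclideanSpace.single_apply]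

lemma hess_col0 (p : E3) (i : Fin 3) :
    hessian U p i 0 = M0 p (EuclideanSpace.single i 1) := by
  rw [hessian_U, show (fun q : E3 => L q (EuclideanSpace.single (0 : Fin 3) 1)) = f0
    from funext L_apply0, (hasFDerivAt_f0 p).fderiv]

lemma hess_col1 (p : E3) (i : Fin 3) :
    hessian U p i 1 = M1 p (EuclideanSpace.single i 1) := by
  rw [hessian_U, show (fun q : E3 => L q (EuclideanSpace.single (1 : Fin 3) 1)) = f1
    from funext L_apply1, (hasFDerivAt_f1 p).fderiv]

lemma hess_col2 (p : E3) (i : Fin 3) :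
    hessian U p i 2 = M2 p (EuclideanSpace.single i 1) := by
  rw [hessian_U, show (fun q : E3 => L q (EuclideanSpace.single (2 : Fin 3) 1)) = f2
    from funext L_apply2, (hasFDerivAt_f2 p).fderiv]

lemma hess00 (p : E3) : hessian U p 0 0 = (Real.exp (4 * p 2) - 1) * 2⁻¹ := by
  rw [hess_col0]; simp [M0, EuclideanSpace.single_apply]

lemma hess10 (p : E3) : hessian U p 1 0 = 0 := by
  rw [hess_col0]; simp [M0, EuclideanSpace.single_apply]

lemma hess20 (p : E3) : hessian U p 2 0 = 2 * Real.exp (4 * p 2) * p 0 := by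
  rw [hess_col0]; simp [M0, EuclideanSpace.single_apply]

lemma hess01 (p : E3) : hessian U p 0 1 = 0 := by
  rw [hess_col1]; simp [M1, EuclideanSpace.single_apply]

lemma hess11 (p : E3) : hessian U p 1 1 = (Real.exp (4 * p 2) - 1) * 2⁻¹ := by
  rw [hess_col1]; simp [M1, EuclideanSpace.single_apply]

lemma hess21 (p : E3) : hessian U p 2 1 = 2 * Real.exp (4 * p 2) * p 1 := by
  rw [hess_col1]; simp [M1, EuclideanSpace.single_apply]

lemma hess02 (p : E3) : hessian U p 0 2 = 2 * Real.exp (4 * p 2) * p 0 := by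
  rw [hess_col2]; simp [M2, EuclideanSpace.single_apply]

lemma hess12 (p : E3) : hessian U p 1 2 = 2 * Real.exp (4 * p 2) * p 1 := by
  rw [hess_col2]; simp [M2, EuclideanSpace.single_apply]

lemma hess22 (p : E3) : hessian U p 2 2 = 4 * Real.exp (4 * p 2) * (p 0 * p 0 + p 1 * p 1)
    + (7 * Real.exp (-(4 * p 2)) - Real.exp (4 * p 2)) * 4⁻¹ - 2⁻¹ := by
  rw [hess_col2]; simp [M2, EuclideanSpace.single_apply]

end AnalysisPart

theorem example_nonpolynomial_one_convex_solution
    (u : EuclideanSpace ℝ (Fin 3) → ℝ)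
    (hu : ∀ p : EuclideanSpace ℝ (Fin 3),
      u p = ((Real.exp (4 * p 2) - 1) / 4) * ((p 0) ^ 2 + (p 1) ^ 2)
        + (1 / 16) * (7 * Real.exp (-(4 * p 2)) / 4 - Real.exp (4 * p 2) / 4
          - 4 * (p 2) ^ 2)) :
    ∀ p : EuclideanSpace ℝ (Fin 3),
      sigmaMat 2 (hessian u p) + sigmaMat 1 (hessian u p) = 1 ∧
      0 < sigmaMat 1 (hessian u p) := by
  have hU : u = AnalysisPart.U := funext hu
  subst hU
  intro p
  have hE := Real.exp_pos (4 * p 2)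
  have hne : Real.exp (4 * p 2) ≠ 0 := ne_of_gt hE
  have hEn : Real.exp (-(4 * p 2)) = (Real.exp (4 * p 2))⁻¹ := Real.exp_neg _
  rw [SigmaProof.sigmaMat_one, SigmaProof.sigmaMat_two,
    AnalysisPart.hess00, AnalysisPart.hess01, AnalysisPart.hess02, AnalysisPart.hess10,
    AnalysisPart.hess11, AnalysisPart.hess12, AnalysisPart.hess20, AnalysisPart.hess21,
    AnalysisPart.hess22, hEn]
  constructor
  · field_simp
    ring
  · have key : (Real.exp (4 * p 2) - 1) * 2⁻¹ + (Real.exp (4 * p 2) - 1) * 2⁻¹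
        + (4 * Real.exp (4 * p 2) * (p 0 * p 0 + p 1 * p 1)
          + (7 * (Real.exp (4 * p 2))⁻¹ - Real.exp (4 * p 2)) * 4⁻¹ - 2⁻¹)
        = (3 * (Real.exp (4 * p 2) - 1) ^ 2 + 4
            + 16 * Real.exp (4 * p 2) ^ 2 * (p 0 * p 0 + p 1 * p 1)) / (4 * Real.exp (4 * p 2)) := by
      field_simp
      ring
    rw [key]
    apply div_pos
    · nlinarith [sq_nonneg (Real.exp (4 * p 2) - 1), mul_self_nonneg (p 0), mul_self_nonneg (p 1),
        sq_nonneg (Real.exp (4 * p 2) * p 0), sq_nonneg (Real.exp (4 * p 2) * p 1)]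
    · positivity
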